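/- Let O be a complete discrete valuation ring with maximal ideal 𝔭, residue characteristic p, and residue field k. Let F(T) = α_0 + α_1 T + α_2 T² + ⋯ ∈ O[[T]] with v(α_0) > 0, and suppose the m-th compositional iterate of F equals the identity power series T, where m is coprime to p. If the reduction of α_1 in k equals 1 and F(T) ≠ T, then a contradiction follows; i.e., if α_1 ≡ 1 mod 𝔭 and F^{∘m}(T) = T with gcd(m,p) = 1, then F(T) = T. -/

import Mathlib

open PowerSeries

/-- Composition `F ∘ G` of formal power series, valid when `G` has zero constant term. -/
noncomputable def psComp {R : Type*} [CommRing R] (F G : PowerSeries R) : PowerSeries R :=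
  PowerSeries.mk fun n => ∑ k ∈ Finset.range (n + 1), coeff k F * coeff n (G ^ k)

/-- `m`-th compositional iterate `F^{∘m}`. -/
noncomputable def psIter {R : Type*} [CommRing R] : ℕ → PowerSeries R → PowerSeries R
  | 0, _ => PowerSeries.X
  | m + 1, F => psComp F (psIter m F)

namespace Stmt7Aux

variable {R : Type*} [CommRing R]

lemma coeff_psComp (F G : PowerSeries R) (n : ℕ) :
    coeff n (psComp F G) = ∑ k ∈ Finset.range (n + 1), coeff k F * coeff n (G ^ k) := by
  simp [psComp]

lemma coeff_zero_psComp (F G : PowerSeries R) :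
    coeff 0 (psComp F G) = coeff 0 F := by
  simp [coeff_psComp]

lemma coeff_one_psComp (F G : PowerSeries R) :
    coeff 1 (psComp F G) = coeff 1 F * coeff 1 G := by
  rw [coeff_psComp]
  rw [Finset.sum_range_succ, Finset.sum_range_one]
  simp [PowerSeries.coeff_one]

lemma coeff_zero_psIter (F : PowerSeries R) (t : ℕ) (ht : 1 ≤ t) :
    coeff 0 (psIter t F) = coeff 0 F := by
  obtain ⟨s, rfl⟩ := Nat.exists_eq_add_of_le ht
  rw [show 1 + s = s + 1 by omega]
  exact coeff_zero_psComp F _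

lemma coeff_one_psIter (F : PowerSeries R) (t : ℕ) :
    coeff 1 (psIter t F) = (coeff 1 F) ^ t := by
  induction t with
  | zero => simp [psIter]
  | succ t ih => rw [psIter, coeff_one_psComp, ih]; ring

lemma coeff_of_shape {d : ℕ} {H : PowerSeries R} (hd : 2 ≤ d)
    (hlt : ∀ j < d, coeff j H = coeff j X) :
    ∀ a ≤ d, coeff a H =
      (if a = 1 then 1 else 0) + (if a = d then coeff d H else 0) := by
  intro a ha
  rcases eq_or_lt_of_le ha with rfl | h
  · have : ¬ (a = 1) := by omega
    simp [this]
  · rw [hlt a h, PowerSeries.coeff_X]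
    have : ¬ (a = d) := by omega
    simp [this]

lemma coeff_pow_shape {d : ℕ} {H : PowerSeries R} (hd : 2 ≤ d)
    (hlt : ∀ j < d, coeff j H = coeff j X) :
    ∀ k : ℕ, ∀ j ≤ d, coeff j (H ^ k) =
      (if j = k then 1 else 0) + (if k = 1 ∧ j = d then coeff d H else 0) := by
  intro k
  induction k with
  | zero =>
    intro j hj
    simp [PowerSeries.coeff_one]
  | succ k ih =>
    intro j hj
    rw [pow_succ', PowerSeries.coeff_mul, Finset.Nat.sum_antidiagonal_eq_sum_range_succ_mk]
    have hstep : ∀ i ∈ Finset.range (j + 1),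
        coeff i H * coeff (j - i) (H ^ k) =
        (if i = 1 then ((if j - i = k then 1 else 0)
            + (if k = 1 ∧ j - i = d then coeff d H else 0)) else 0)
        + (if i = d then coeff d H * ((if j - i = k then 1 else 0)
            + (if k = 1 ∧ j - i = d then coeff d H else 0)) else 0) := by
      intro i hi
      rw [Finset.mem_range] at hi
      rw [coeff_of_shape hd hlt i (by omega), ih (j - i) (by omega)]
      have h1d : ¬ (d = 1) := by omega
      by_cases hi1 : i = 1
      · subst hi1
        simp only [if_pos rfl, if_neg (show ¬(1 = d) by omega), if_true]; ring
      · by_cases hid : i = d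
        · subst hid
          simp only [if_pos rfl, if_neg h1d, if_neg hi1, if_true]; ring
        · simp [hi1, hid]
    rw [Finset.sum_congr rfl hstep, Finset.sum_add_distrib,
      Finset.sum_ite_eq' _ 1, Finset.sum_ite_eq' _ d]
    simp only [Finset.mem_range]
    split_ifs <;> first | (exfalso; omega) | ring

lemma coeff_psComp_shape {d : ℕ} {G H : PowerSeries R} (hd : 2 ≤ d)
    (hGlt : ∀ j < d, coeff j G = coeff j X)
    (hHlt : ∀ j < d, coeff j H = coeff j X) :
    ∀ j ≤ d, coeff j (psComp G H) =
      coeff j X + (if j = d then coeff d G + coeff d H else 0) := by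
  intro j hj
  rw [coeff_psComp, PowerSeries.coeff_X]
  have hstep : ∀ k ∈ Finset.range (j + 1),
      coeff k G * coeff j (H ^ k) =
      (if k = 1 then ((if j = k then 1 else 0)
          + (if k = 1 ∧ j = d then coeff d H else 0)) else 0)
      + (if k = d then coeff d G * ((if j = k then 1 else 0)
          + (if k = 1 ∧ j = d then coeff d H else 0)) else 0) := by
    intro k hk
    rw [Finset.mem_range] at hk
    rw [coeff_of_shape hd hGlt k (by omega), coeff_pow_shape hd hHlt k j hj]
    have h1d : ¬ (d = 1) := by omega
    by_cases hk1 : k = 1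
    · subst hk1
      simp only [if_pos rfl, if_neg (show ¬(1 = d) by omega), if_true]; ring
    · by_cases hkd : k = d
      · subst hkd
        simp only [if_pos rfl, if_neg h1d, if_neg hk1, if_true]; ring
      · simp [hk1, hkd]
  rw [Finset.sum_congr rfl hstep, Finset.sum_add_distrib,
    Finset.sum_ite_eq' _ 1, Finset.sum_ite_eq' _ d]
  simp only [Finset.mem_range, true_and, and_true, eq_self_iff_true]
  split_ifs <;> first | (exfalso; omega) | ring

lemma coeff_psIter_shape {d : ℕ} {F : PowerSeries R} (hd : 2 ≤ d)
    (hlt : ∀ j < d, coeff j F = coeff j X) :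
    ∀ t : ℕ, ∀ j ≤ d, coeff j (psIter t F) =
      coeff j X + (if j = d then (t : R) * coeff d F else 0) := by
  intro t
  induction t with
  | zero => intro j hj; simp [psIter]
  | succ t ih =>
    intro j hj
    have hIlt : ∀ i < d, coeff i (psIter t F) = coeff i X := by
      intro i hi
      rw [ih i (le_of_lt hi), if_neg (by omega)]; ring
    rw [show psIter (t+1) F = psComp F (psIter t F) from rfl,
      coeff_psComp_shape hd hlt hIlt j hj, ih d le_rfl, if_pos rfl]
    have hXd : coeff d (X : PowerSeries R) = 0 := by
      rw [PowerSeries.coeff_X, if_neg (by omega)]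
    rw [hXd]
    split_ifs <;> push_cast <;> ring


lemma isUnit_natCast_of_coprime {O : Type*} [CommRing O] [IsLocalRing O]
    {p m : ℕ} (hres : (p : O) ∈ IsLocalRing.maximalIdeal O)
    (hmp : Nat.gcd m p = 1) : IsUnit (m : O) := by
  by_contra h
  have hmem : (m : O) ∈ IsLocalRing.maximalIdeal O :=
    (IsLocalRing.mem_maximalIdeal _).mpr (mem_nonunits_iff.mpr h)
  have hcop : IsCoprime (m : ℤ) (p : ℤ) := Nat.isCoprime_iff_coprime.mpr hmp
  have hcop2 := hcop.map (Int.castRingHom O)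
  simp only [map_natCast] at hcop2
  obtain ⟨a, b, hab⟩ := hcop2
  have h1 : (1 : O) ∈ IsLocalRing.maximalIdeal O := by
    rw [← hab]
    exact add_mem (Ideal.mul_mem_left _ _ hmem) (Ideal.mul_mem_left _ _ hres)
  exact (IsLocalRing.maximalIdeal.isMaximal O).ne_top (Ideal.eq_top_iff_one _ |>.mpr h1)

end Stmt7Aux

/-- Let `O` be a complete discrete valuation ring with maximal ideal `𝔭`
and residue characteristic `p`.  Let `F(T) = α₀ + α₁ T + ⋯ ∈ O[[T]]` with `v(α₀) > 0`
(i.e. `α₀ ∈ 𝔭`), suppose the `m`-th compositional iterate of `F` is `T` with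
`gcd(m, p) = 1`, and suppose `α₁ ≡ 1 mod 𝔭`.  Then `F(T) = T`. -/

theorem stmt_7 {O : Type*} [CommRing O] [IsDomain O] [IsDiscreteValuationRing O]
    [IsAdicComplete (IsLocalRing.maximalIdeal O) O]
    (p : ℕ) (hp : p.Prime) (hres : (p : O) ∈ IsLocalRing.maximalIdeal O)
    (F : PowerSeries O)
    (h0 : coeff 0 F ∈ IsLocalRing.maximalIdeal O)
    (h1 : coeff 1 F - 1 ∈ IsLocalRing.maximalIdeal O)
    (m : ℕ) (hm : 1 ≤ m) (hmp : Nat.gcd m p = 1)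
    (hiter : psIter m F = PowerSeries.X) :
    F = PowerSeries.X := by
  classical
  have hu : IsUnit (m : O) := Stmt7Aux.isUnit_natCast_of_coprime hres hmp
  have hF0 : coeff 0 F = 0 := by
    have h := Stmt7Aux.coeff_zero_psIter F m hm
    rw [hiter, PowerSeries.coeff_zero_X] at h
    exact h.symm
  have hF1 : coeff 1 F = 1 := by
    have hpow : (coeff 1 F) ^ m = 1 := by
      have h := Stmt7Aux.coeff_one_psIter F m
      rw [hiter, PowerSeries.coeff_one_X] at h
      exact h.symm
    have hfac : (∑ i ∈ Finset.range m, (coeff 1 F) ^ i) * (coeff 1 F - 1) = 0 := by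
      rw [geom_sum_mul, hpow, sub_self]
    rcases mul_eq_zero.mp hfac with hs | hs
    · exfalso
      have hsum : (∑ i ∈ Finset.range m, (coeff 1 F) ^ i) - (m : O)
          ∈ IsLocalRing.maximalIdeal O := by
        have hrw : (∑ i ∈ Finset.range m, (coeff 1 F) ^ i) - (m : O)
            = ∑ i ∈ Finset.range m, ((coeff 1 F) ^ i - 1) := by
          rw [Finset.sum_sub_distrib]
          simp
        rw [hrw]
        refine Ideal.sum_mem _ fun i _ => ?_
        rw [← geom_sum_mul (coeff 1 F) i]
        exact Ideal.mul_mem_left _ _ h1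
      rw [hs, zero_sub] at hsum
      have : (m : O) ∈ IsLocalRing.maximalIdeal O := by
        simpa using neg_mem hsum
      exact ((IsLocalRing.mem_maximalIdeal _).mp this) hu
    · exact sub_eq_zero.mp hs
  by_contra hne
  have hex : ∃ d, coeff d F ≠ coeff d X := by
    by_contra h
    push_neg at h
    exact hne (PowerSeries.ext h)
  have hdspec : coeff (Nat.find hex) F ≠ coeff (Nat.find hex) X := Nat.find_spec hex
  set d := Nat.find hex with hdd
  have hlt : ∀ j < d, coeff j F = coeff j X := by
    intro j hj
    have := Nat.find_min hex hj
    exact not_not.mp this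
  have hd0 : d ≠ 0 := by
    intro h
    apply hdspec
    rw [h, hF0, PowerSeries.coeff_zero_X]
  have hd1 : d ≠ 1 := by
    intro h
    apply hdspec
    rw [h, hF1, PowerSeries.coeff_one_X]
  have hd : 2 ≤ d := by omega
  have hkey := Stmt7Aux.coeff_psIter_shape hd hlt m d le_rfl
  rw [hiter, if_pos rfl] at hkey
  have hz : (m : O) * coeff d F = 0 := left_eq_add.mp hkey
  have hzero : coeff d F = 0 := (IsUnit.mul_right_eq_zero hu).mp hz
  apply hdspec
  rw [hzero, PowerSeries.coeff_X, if_neg (by omega)]
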